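/- Let p : (0,∞) → ℝ be the path-length distribution of the two-dimensional periodic Lorentz gas: p(s) = 24/π² for 0 ≤ s < 1/2, and p(s) = (24/π²) ( 1/(2s) + 2(1 − 1/(2s))² ln(1 − 1/(2s)) − (1/2)(1 − 1/s)² ln(1 − 1/s) ) for s ≥ 1/2. Then lim_{s→∞} s³ p(s) = 2/π²; in particular, p(s) ~ (2/π²) s^{−3} as s → ∞, so the second moment ∫₁^∞ s² p(s) ds diverges (logarithmically). -/

import Mathlib

open MeasureTheory Filter Set
open scoped Real

noncomputable section

/-- The path-length distribution of the two-dimensional periodic Lorentz gas. -/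
noncomputable def lorentzP (s : ℝ) : ℝ :=
  if s < 1 / 2 then 24 / π ^ 2
  else 24 / π ^ 2 *
    (1 / (2 * s) + 2 * (1 - 1 / (2 * s)) ^ 2 * Real.log (1 - 1 / (2 * s)) -
      1 / 2 * (1 - 1 / s) ^ 2 * Real.log (1 - 1 / s))

/-- Error term of the degree-3 Taylor expansion of `log (1-x)`, divided by `x^3`. -/
noncomputable def lorentzEps (x : ℝ) : ℝ :=
  (Real.log (1 - x) + (x + x ^ 2 / 2 + x ^ 3 / 3)) / x ^ 3

lemma lorentzEps_bound {x : ℝ} (hx : 0 < x) (hx' : x < 1 / 2) :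
    |lorentzEps x| ≤ x / (1 - x) := by
  have h1 : |x| < 1 := by rw [abs_of_pos hx]; linarith
  have key := Real.abs_log_sub_add_sum_range_le h1 3
  have hsum : (∑ i ∈ Finset.range 3, x ^ (i + 1) / (i + 1)) = x + x ^ 2 / 2 + x ^ 3 / 3 := by
    simp [Finset.sum_range_succ]; ring
  rw [hsum, abs_of_pos hx] at key
  have hx3 : (0:ℝ) < x ^ 3 := by positivity
  rw [lorentzEps, abs_div, abs_of_pos hx3, div_le_iff₀ hx3]
  calc |Real.log (1 - x) + (x + x ^ 2 / 2 + x ^ 3 / 3)|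
      = |(x + x ^ 2 / 2 + x ^ 3 / 3) + Real.log (1 - x)| := by ring_nf
    _ ≤ x ^ 4 / (1 - x) := key
    _ = x / (1 - x) * x ^ 3 := by ring

lemma tendsto_lorentzEps : Tendsto lorentzEps (nhdsWithin 0 (Ioi 0)) (nhds 0) := by
  have hb : Tendsto (fun x : ℝ => x / (1 - x)) (nhdsWithin 0 (Ioi 0)) (nhds 0) := by
    have : Tendsto (fun x : ℝ => x / (1 - x)) (nhds 0) (nhds (0 / (1 - 0))) := by
      apply Tendsto.div tendsto_id (tendsto_const_nhds.sub tendsto_id)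
      norm_num
    simpa using this.mono_left nhdsWithin_le_nhds
  apply squeeze_zero_norm' _ hb
  filter_upwards [Ioo_mem_nhdsGT_of_mem (by norm_num : (0:ℝ) ∈ Ico 0 (1/2))] with x hx
  exact lorentzEps_bound hx.1 hx.2

/-- Key limit: `F x / x³ → 2/3` where
`F x = x + 2(1-x)² log(1-x) - (1/2)(1-2x)² log(1-2x)`. -/
lemma lorentz_key :
    Tendsto (fun x : ℝ =>
        (x + 2 * (1 - x) ^ 2 * Real.log (1 - x)
          - 1 / 2 * (1 - 2 * x) ^ 2 * Real.log (1 - 2 * x)) / x ^ 3)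
      (nhdsWithin 0 (Ioi 0)) (nhds (2 / 3)) := by
  have h2x : Tendsto (fun x : ℝ => 2 * x) (nhdsWithin 0 (Ioi 0)) (nhdsWithin 0 (Ioi 0)) := by
    apply tendsto_nhdsWithin_of_tendsto_nhds_of_eventually_within
    · have h : Tendsto (fun x : ℝ => 2 * x) (nhds 0) (nhds (2 * 0)) :=
        tendsto_const_nhds.mul tendsto_id
      simpa using h.mono_left nhdsWithin_le_nhds
    · filter_upwards [self_mem_nhdsWithin] with x hx
      exact mul_pos two_pos (Set.mem_Ioi.mp hx)
  have he2 : Tendsto (fun x : ℝ => lorentzEps (2 * x)) (nhdsWithin 0 (Ioi 0)) (nhds 0) :=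
    tendsto_lorentzEps.comp h2x
  -- the limit of the explicit expression
  have hQ : Tendsto (fun x : ℝ => (2 / 3 - x + 14 / 3 * x ^ 2)
      + (2 * (1 - x) ^ 2 * lorentzEps x - 4 * (1 - 2 * x) ^ 2 * lorentzEps (2 * x)))
      (nhdsWithin 0 (Ioi 0)) (nhds (2 / 3)) := by
    have hpoly : Tendsto (fun x : ℝ => 2 / 3 - x + 14 / 3 * x ^ 2) (nhds 0)
        (nhds (2 / 3 - 0 + 14 / 3 * 0 ^ 2)) := by
      apply Tendsto.add
      · exact (tendsto_const_nhds.sub tendsto_id)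
      · exact tendsto_const_nhds.mul (tendsto_id.pow 2)
    have hc1 : Tendsto (fun x : ℝ => 2 * (1 - x) ^ 2) (nhds 0) (nhds (2 * (1 - 0) ^ 2)) := by
      exact tendsto_const_nhds.mul ((tendsto_const_nhds.sub tendsto_id).pow 2)
    have hc2 : Tendsto (fun x : ℝ => 4 * (1 - 2 * x) ^ 2) (nhds 0)
        (nhds (4 * (1 - 2 * 0) ^ 2)) := by
      exact tendsto_const_nhds.mul
        ((tendsto_const_nhds.sub (tendsto_const_nhds.mul tendsto_id)).pow 2)
    have := (hpoly.mono_left (nhdsWithin_le_nhds (s := Ioi (0:ℝ)))).add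
      (((hc1.mono_left nhdsWithin_le_nhds).mul tendsto_lorentzEps).sub
        ((hc2.mono_left nhdsWithin_le_nhds).mul he2))
    simpa using this
  apply hQ.congr'
  filter_upwards [Ioo_mem_nhdsGT_of_mem (by norm_num : (0:ℝ) ∈ Ico 0 (1/2))] with x hx
  have hx0 : x ≠ 0 := ne_of_gt hx.1
  have hx3 : x ^ 3 ≠ 0 := pow_ne_zero 3 hx0
  have h8 : (2 * x) ^ 3 = 8 * x ^ 3 := by ring
  have e1 : Real.log (1 - x) = lorentzEps x * x ^ 3 - (x + x ^ 2 / 2 + x ^ 3 / 3) := by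
    rw [lorentzEps]; field_simp; ring
  have e2 : Real.log (1 - 2 * x)
      = lorentzEps (2 * x) * (8 * x ^ 3) - (2 * x + (2 * x) ^ 2 / 2 + (2 * x) ^ 3 / 3) := by
    rw [lorentzEps, ← h8]; field_simp; ring
  rw [e1, e2]
  field_simp
  ring

lemma lorentz_main :
    Tendsto (fun s : ℝ => s ^ 3 * lorentzP s) atTop (nhds (2 / π ^ 2)) := by
  have hπ : (π : ℝ) ≠ 0 := Real.pi_ne_zero
  have hcomp : Tendsto (fun s : ℝ => 1 / (2 * s)) atTop (nhdsWithin 0 (Ioi 0)) := by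
    apply tendsto_nhdsWithin_of_tendsto_nhds_of_eventually_within
    · have : Tendsto (fun s : ℝ => 2 * s) atTop atTop :=
        (tendsto_id (α := ℝ)).const_mul_atTop two_pos
      exact tendsto_const_nhds.div_atTop this
    · filter_upwards [eventually_gt_atTop (0:ℝ)] with s hs
      have : (0:ℝ) < 1 / (2 * s) := by positivity
      exact this
  have hT := lorentz_key.comp hcomp
  have hlim : Tendsto (fun s : ℝ => 24 / π ^ 2 / 8 *
      ((1 / (2 * s) + 2 * (1 - 1 / (2 * s)) ^ 2 * Real.log (1 - 1 / (2 * s))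
        - 1 / 2 * (1 - 2 * (1 / (2 * s))) ^ 2 * Real.log (1 - 2 * (1 / (2 * s))))
        / (1 / (2 * s)) ^ 3)) atTop (nhds (24 / π ^ 2 / 8 * (2 / 3))) :=
    tendsto_const_nhds.mul hT
  have hval : 24 / π ^ 2 / 8 * (2 / 3) = 2 / π ^ 2 := by
    field_simp; ring
  rw [hval] at hlim
  apply hlim.congr'
  filter_upwards [eventually_ge_atTop (1:ℝ)] with s hs
  have hs0 : s ≠ 0 := ne_of_gt (by linarith)
  have hnot : ¬ s < 1 / 2 := by linarith
  have h2s : 2 * (1 / (2 * s)) = 1 / s := by field_simp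
  rw [lorentzP, if_neg hnot, h2s]
  field_simp
  ring

/-- the Lorentz-gas path-length distribution satisfies
`s³ p(s) → 2/π²` as `s → ∞`; in particular `p(s) ~ (2/π²) s⁻³`, and its second moment
`∫₁^∞ s² p(s) ds` diverges. -/
theorem lorentz_tail_asymptotics :
    Tendsto (fun s : ℝ => s ^ 3 * lorentzP s) atTop (nhds (2 / π ^ 2)) ∧
    Tendsto (fun s : ℝ => lorentzP s / (2 / π ^ 2 / s ^ 3)) atTop (nhds 1) ∧
    ¬ IntegrableOn (fun s : ℝ => s ^ 2 * lorentzP s) (Set.Ioi (1 : ℝ)) := by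
  have hπ : (π : ℝ) ≠ 0 := Real.pi_ne_zero
  have hπ2 : (0:ℝ) < 2 / π ^ 2 := by positivity
  refine ⟨lorentz_main, ?_, ?_⟩
  · have := lorentz_main.div_const (2 / π ^ 2)
    rw [div_self (ne_of_gt hπ2)] at this
    apply this.congr'
    filter_upwards [eventually_gt_atTop (0:ℝ)] with s hs
    have hs0 : s ≠ 0 := ne_of_gt hs
    field_simp
  · intro hInt
    -- eventually `s³ p(s) ≥ 1/π²`
    have hev : ∀ᶠ s in atTop, 1 / π ^ 2 ≤ s ^ 3 * lorentzP s := by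
      have : ∀ᶠ s in atTop, s ^ 3 * lorentzP s ∈ Ioi (1 / π ^ 2) := by
        apply lorentz_main.eventually_mem
        apply Ioi_mem_nhds
        have : (0:ℝ) < 1 / π ^ 2 := by positivity
        rw [div_lt_div_iff_of_pos_right (by positivity)]
        norm_num
      filter_upwards [this] with s hs using le_of_lt hs
    obtain ⟨M₀, hM₀⟩ := hev.exists_forall_of_atTop
    set M := max M₀ 1 with hM
    have hM1 : (1:ℝ) ≤ M := le_max_right _ _
    have hIntM : IntegrableOn (fun s : ℝ => s ^ 2 * lorentzP s) (Ioi M) :=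
      hInt.mono_set (Ioi_subset_Ioi hM1)
    have hg : IntegrableOn (fun s : ℝ => (π ^ 2)⁻¹ * s⁻¹) (Ioi M) := by
      refine Integrable.mono hIntM
        ((aestronglyMeasurable_const.mul measurable_inv.aestronglyMeasurable).restrict) ?_
      rw [ae_restrict_iff' measurableSet_Ioi]
      filter_upwards with s hs
      have hsM : M < s := hs
      have hs1 : (1:ℝ) < s := lt_of_le_of_lt hM1 hsM
      have hs0 : (0:ℝ) < s := by linarith
      have hle : 1 / π ^ 2 ≤ s ^ 3 * lorentzP s :=
        hM₀ s (le_of_lt (lt_of_le_of_lt (le_max_left _ _) hsM))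
      have hle' : (π ^ 2)⁻¹ ≤ s ^ 3 * lorentzP s := by rwa [← one_div]
      have h2 : s ^ 2 * lorentzP s = s ^ 3 * lorentzP s * s⁻¹ := by
        field_simp
      have hkey : (π ^ 2)⁻¹ * s⁻¹ ≤ s ^ 2 * lorentzP s := by
        rw [h2]
        exact mul_le_mul_of_nonneg_right hle' (inv_nonneg.mpr hs0.le)
      have hgn : (0:ℝ) ≤ (π ^ 2)⁻¹ * s⁻¹ := by positivity
      rw [Real.norm_eq_abs, Real.norm_eq_abs, abs_of_nonneg hgn]
      exact hkey.trans (le_abs_self _)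
    have : IntegrableOn (fun s : ℝ => s⁻¹) (Ioi M) := by
      have h := hg.const_mul (π ^ 2)
      have heq : (fun s : ℝ => π ^ 2 * ((π ^ 2)⁻¹ * s⁻¹)) = fun s : ℝ => s⁻¹ := by
        funext s
        rw [← mul_assoc, mul_inv_cancel₀ (pow_ne_zero 2 hπ), one_mul]
      rwa [heq] at h
    exact not_IntegrableOn_Ioi_inv this
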